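/- Let V be a real Hilbert space, V_n a finite-dimensional subspace and W_m a complete subspace of V. If β(V_n, W_m) := inf_{v∈V_n\{0}} ‖P_{W_m} v‖/‖v‖ > 0, then the linear operator on V_n defined by v ↦ P_{V_n}(P_{W_m} v) is bijective. -/

import Mathlib

/-- If the inf-sup constant
`β(V_n, W_m) := inf_{v ∈ V_n \ {0}} ‖P_{W_m} v‖ / ‖v‖` is positive, with `V_n`
finite-dimensional and `W_m` complete, then the linear operator on `V_n` given by
`v ↦ P_{V_n}(P_{W_m} v)` is bijective. -/
theorem stmt1 {V : Type*} [NormedAddCommGroup V] [InnerProductSpace ℝ V]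
    (Vn Wm : Submodule ℝ V) [FiniteDimensional ℝ Vn] [CompleteSpace Wm]
    (hβ : 0 < sInf {r : ℝ | ∃ v ∈ Vn, v ≠ 0 ∧
      r = ‖(Wm.orthogonalProjection v : V)‖ / ‖v‖}) :
    Function.Bijective (fun v : Vn =>
      Vn.orthogonalProjection ((Wm.orthogonalProjection (v : V) : V))) := by
  set f : Vn →ₗ[ℝ] Vn :=
    Vn.orthogonalProjection.toLinearMap.comp
      (Wm.subtype.comp (Wm.orthogonalProjection.toLinearMap.comp Vn.subtype)) with hf
  have hfun : (fun v : Vn =>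
      Vn.orthogonalProjection ((Wm.orthogonalProjection (v : V) : V))) = ⇑f := rfl
  rw [hfun]
  have hinj : Function.Injective f := by
    rw [← LinearMap.ker_eq_bot, Submodule.eq_bot_iff]
    intro v hv
    have hv0 : Vn.orthogonalProjection ((Wm.orthogonalProjection (v : V) : V)) = 0 := hv
    -- ⟪P_Wm v, v⟫ = 0
    have h1 : (inner ℝ ((Wm.orthogonalProjection (v : V) : V)) (v : V) : ℝ) = 0 := by
      have : inner ℝ (Vn.orthogonalProjection (Wm.orthogonalProjection (v : V) : V) : V) (v : V)
          = inner ℝ (Wm.orthogonalProjection (v : V) : V) (Vn.orthogonalProjection (v : V) : V) :=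
        Submodule.inner_starProjection_left_eq_right Vn
        ((Wm.orthogonalProjection (v : V) : V)) (v : V)
      -- ⟪P_Vn (P_Wm v), v⟫ = ⟪P_Wm v, P_Vn v⟫
      rw [show (Vn.orthogonalProjection (v : V) : V) = v from Submodule.starProjection_eq_self_iff.mpr v.2] at this
      rw [← this, hv0]
      simp
    -- ⟪P_Wm v, v⟫ = ‖P_Wm v‖²
    have h2 : (inner ℝ ((Wm.orthogonalProjection (v : V) : V)) (v : V) : ℝ)
        = ‖(Wm.orthogonalProjection (v : V) : V)‖ ^ 2 := by
      have : inner ℝ (Wm.orthogonalProjectionOnto (Wm.orthogonalProjection (v : V) : V) : V) (v : V)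
          = inner ℝ (Wm.orthogonalProjection (v : V) : V) (Wm.orthogonalProjection (v : V) : V) :=
        Submodule.inner_starProjection_left_eq_right Wm
        ((Wm.orthogonalProjection (v : V) : V)) (v : V)
      rw [Submodule.orthogonalProjectionOnto_mem_subspace_eq_self] at this
      rw [real_inner_self_eq_norm_sq] at this
      exact this
    have hw0 : (Wm.orthogonalProjection (v : V) : V) = 0 := by
      have : ‖(Wm.orthogonalProjection (v : V) : V)‖ ^ 2 = 0 := by rw [← h2, h1]
      simpa using this
    by_contra hvne
    have hvV : (v : V) ≠ 0 := fun h => hvne (Subtype.ext h)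
    have hmem : (0 : ℝ) ∈ {r : ℝ | ∃ v ∈ Vn, v ≠ 0 ∧
        r = ‖(Wm.orthogonalProjection v : V)‖ / ‖v‖} :=
      ⟨(v : V), v.2, hvV, by rw [hw0]; simp⟩
    have hbdd : BddBelow {r : ℝ | ∃ v ∈ Vn, v ≠ 0 ∧
        r = ‖(Wm.orthogonalProjection v : V)‖ / ‖v‖} := by
      refine ⟨0, fun r hr => ?_⟩
      obtain ⟨w, _, _, rfl⟩ := hr
      positivity
    have := csInf_le hbdd hmem
    linarith
  exact ⟨hinj, (LinearMap.injective_iff_surjective).mp hinj⟩
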